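/- arXiv:0812.2899 — 4 statements merged into one kernel-verified Lean document; each statement's English description precedes it below -/
import Mathlib

section
/- Let f : X → Y be a perfect surjection between metric spaces, d a metric on X, m ≥ 1, and for y ∈ Y let 𝓑_f(m,y) be the set of continuous g : X → M (M a metric space) such that for every z ∈ M and any two continua K₀, K₁ ⊆ f⁻¹(y) ∩ g⁻¹(z) with K₀ ∩ K₁ ≠ ∅, either K₀ ⊆ B(K₁, 1/m) or K₁ ⊆ B(K₀, 1/m). Then a continuous map g : X → M restricts to a Bing map on f⁻¹(y) for every y in a closed set H ⊆ Y if and only if g ∈ 𝓑_f(m,y) for all m ≥ 1 and all y ∈ H. -/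
open Set Metric Topology Filter

/-- Covering dimension ≤ 0: every open cover has a pairwise disjoint open refinement. -/
def DimLE0 (X : Type*) [TopologicalSpace X] : Prop :=
  ∀ 𝒰 : Set (Set X), (∀ U ∈ 𝒰, IsOpen U) → ⋃₀ 𝒰 = Set.univ →
    ∃ 𝒱 : Set (Set X), (∀ V ∈ 𝒱, IsOpen V) ∧ ⋃₀ 𝒱 = Set.univ ∧
      𝒱.PairwiseDisjoint id ∧ ∀ V ∈ 𝒱, ∃ U ∈ 𝒰, V ⊆ U

/-- A continuum `K` is indecomposable if it is not the union of two proper subcontinua. -/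
def IsIndecomposable {X : Type*} [TopologicalSpace X] (K : Set X) : Prop :=
  ∀ A B : Set X, A ⊆ K → B ⊆ K → IsCompact A → IsConnected A →
    IsCompact B → IsConnected B → A ∪ B = K → A = K ∨ B = K

/-- A set is a Bing space if all of its subcontinua are indecomposable. -/
def IsBing {X : Type*} [TopologicalSpace X] (Z : Set X) : Prop :=
  ∀ K : Set X, K ⊆ Z → IsCompact K → IsConnected K → IsIndecomposable K

/-- `g ∈ 𝓑_f(m,y)`: for every `z ∈ M` and any two continua `K₀, K₁ ⊆ f⁻¹(y) ∩ g⁻¹(z)`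
with a common point, either `K₀ ⊆ B(K₁,1/m)` or `K₁ ⊆ B(K₀,1/m)`. -/
def MemBf {X Y M : Type*} [MetricSpace X] [MetricSpace Y] [MetricSpace M]
    (f : X → Y) (m : ℕ) (y : Y) (g : X → M) : Prop :=
  ∀ z : M, ∀ K₀ K₁ : Set X,
    K₀ ⊆ f ⁻¹' {y} ∩ g ⁻¹' {z} → K₁ ⊆ f ⁻¹' {y} ∩ g ⁻¹' {z} →
    IsCompact K₀ → IsConnected K₀ → IsCompact K₁ → IsConnected K₁ →
    (K₀ ∩ K₁).Nonempty →
    K₀ ⊆ Metric.thickening (1 / (m : ℝ)) K₁ ∨ K₁ ⊆ Metric.thickening (1 / (m : ℝ)) K₀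

/-- `g` restricts to a Bing map on `f⁻¹(y)`: every fiber of the restriction is a Bing space. -/
def BingOnFiber {X Y M : Type*} [MetricSpace X] [MetricSpace Y] [MetricSpace M]
    (f : X → Y) (g : X → M) (y : Y) : Prop :=
  ∀ z : M, IsBing (f ⁻¹' {y} ∩ g ⁻¹' {z})

lemma subset_of_forall_thickening {X : Type*} [MetricSpace X] {A B : Set X}
    (hB : IsClosed B) (h : ∀ ε : ℝ, 0 < ε → A ⊆ Metric.thickening ε B) : A ⊆ B := by
  intro x hx
  rw [← hB.closure_eq]
  rw [Metric.mem_closure_iff]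
  intro ε hε
  obtain ⟨b, hb, hd⟩ := Metric.mem_thickening_iff.1 (h ε hε hx)
  exact ⟨b, hb, hd⟩

lemma inter_nonempty_of_union {X : Type*} [MetricSpace X] {A B K : Set X}
    (hA : IsCompact A) (hAc : IsConnected A) (hBc : IsConnected B) (hB : IsCompact B)
    (hK : IsConnected K) (hU : A ∪ B = K) : (A ∩ B).Nonempty := by
  by_contra hempty
  rw [Set.not_nonempty_iff_eq_empty, Set.eq_empty_iff_forall_notMem] at hempty
  simp only [Set.mem_inter_iff, not_and] at hempty
  have := hK.isPreconnected
  have h1 : K ⊆ Bᶜ ∪ Aᶜ := by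
    intro x hx
    rw [← hU] at hx
    rcases hx with h | h
    · exact Or.inl (hempty x h)
    · exact Or.inr (fun hxA => hempty x hxA h)
  have h2 := this Bᶜ Aᶜ hB.isClosed.isOpen_compl hA.isClosed.isOpen_compl h1
    (by obtain ⟨a, ha⟩ := hAc.nonempty
        exact ⟨a, by rw [← hU]; exact Or.inl ha, hempty a ha⟩)
    (by obtain ⟨b, hb⟩ := hBc.nonempty
        exact ⟨b, by rw [← hU]; exact Or.inr hb, fun hc => hempty b hc hb⟩)
  obtain ⟨x, hxK, hxB, hxA⟩ := h2
  rw [← hU] at hxK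
  rcases hxK with h | h
  · exact hxA h
  · exact hxB h

/-- Lemma 3.1 of the paper: `𝓑_f(H) = ⋂_{m≥1} 𝓑_f(m,H)`. -/
theorem bing_iff_memBf {X Y M : Type*} [MetricSpace X] [MetricSpace Y] [MetricSpace M]
    (f : X → Y) (hf : Continuous f) (hcl : IsClosedMap f)
    (hsurj : Function.Surjective f) (hfib : ∀ y, IsCompact (f ⁻¹' {y}))
    (H : Set Y) (hH : IsClosed H) (g : X → M) (hg : Continuous g) :
    (∀ y ∈ H, BingOnFiber f g y) ↔ ∀ m : ℕ, 1 ≤ m → ∀ y ∈ H, MemBf f m y g := by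
  constructor
  · -- Bing on fibers ⇒ MemBf for all m
    intro hbing m hm y hy z K₀ K₁ hK₀ hK₁ hc₀ hcn₀ hc₁ hcn₁ hne
    have hKconn : IsConnected (K₀ ∪ K₁) := hcn₀.union hne hcn₁
    have hKsub : K₀ ∪ K₁ ⊆ f ⁻¹' {y} ∩ g ⁻¹' {z} := Set.union_subset hK₀ hK₁
    have hpos : (0 : ℝ) < 1 / m := by
      apply div_pos one_pos
      exact_mod_cast Nat.lt_of_lt_of_le Nat.zero_lt_one hm
    rcases hbing y hy z (K₀ ∪ K₁) hKsub (hc₀.union hc₁) hKconn K₀ K₁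
        Set.subset_union_left Set.subset_union_right hc₀ hcn₀ hc₁ hcn₁ rfl with h | h
    · right
      exact (Set.subset_union_right.trans h.ge).trans (Metric.self_subset_thickening hpos K₀)
    · left
      exact (Set.subset_union_left.trans h.ge).trans (Metric.self_subset_thickening hpos K₁)
  · -- MemBf for all m ⇒ Bing on fibers
    intro hmem y hy z K hK hKc hKconn A B hA hB hAc hAconn hBc hBconn hAB
    have hne : (A ∩ B).Nonempty := inter_nonempty_of_union hAc hAconn hBconn hBc hKconn hAB
    have key : ∀ m : ℕ, 1 ≤ m →
        A ⊆ Metric.thickening (1 / (m : ℝ)) B ∨ B ⊆ Metric.thickening (1 / (m : ℝ)) A :=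
      fun m hm => hmem m hm y hy z A B (hA.trans hK) (hB.trans hK) hAc hAconn hBc hBconn hne
    have main : A ⊆ B ∨ B ⊆ A := by
      by_cases hcase : ∀ n : ℕ, ∃ m : ℕ, n ≤ m ∧ 1 ≤ m ∧ A ⊆ Metric.thickening (1 / (m : ℝ)) B
      · left
        apply subset_of_forall_thickening hBc.isClosed
        intro ε hε
        obtain ⟨n, hn⟩ := exists_nat_one_div_lt hε
        obtain ⟨m, hnm, hm1, hsub⟩ := hcase (n + 1)
        refine hsub.trans (Metric.thickening_mono ?_ B)
        calc (1 : ℝ) / m ≤ 1 / (n + 1) := by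
              apply one_div_le_one_div_of_le (by positivity)
              exact_mod_cast hnm
          _ ≤ ε := le_of_lt hn
      · right
        push_neg at hcase
        obtain ⟨n, hn⟩ := hcase
        apply subset_of_forall_thickening hAc.isClosed
        intro ε hε
        obtain ⟨k, hk⟩ := exists_nat_one_div_lt hε
        set m := max (n + 1) (k + 1) with hmdef
        have hm1 : 1 ≤ m := le_trans (Nat.le_add_left 1 n) (le_max_left _ _)
        have hsub : B ⊆ Metric.thickening (1 / (m : ℝ)) A := by
          rcases key m hm1 with h | h
          · exact absurd h (hn m (le_trans (Nat.le_succ n) (le_max_left _ _)) hm1)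
          · exact h
        refine hsub.trans (Metric.thickening_mono ?_ A)
        calc (1 : ℝ) / m ≤ 1 / (k + 1) := by
              apply one_div_le_one_div_of_le (by positivity)
              exact_mod_cast le_max_right (n + 1) (k + 1)
          _ ≤ ε := le_of_lt hk
    rcases main with h | h
    · right; rw [← hAB]; exact (Set.union_eq_self_of_subset_left h).symm
    · left; rw [← hAB]; exact (Set.union_eq_self_of_subset_right h).symm
end

section
/- Let f : X → Y be a perfect surjection between compact metric spaces, m ≥ 1, y ∈ Y, and suppose the continuous map g : X → (M,ρ) belongs to 𝓑_f(m,y). Then there exist a neighborhood V of y in Y and δ > 0 such that for every y' ∈ V and every continuous g' : X → M with ρ(g'(x), g(x)) < δ for all x ∈ f⁻¹(y'), one has g' ∈ 𝓑_f(m,y'). -/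
open Set Metric Topology Filter

open TopologicalSpace


section Helpers

variable {X : Type*} [MetricSpace X] [CompactSpace X]

lemma hd_ne_top (s t : Set X) (hs : s.Nonempty) (ht : t.Nonempty) :
    EMetric.hausdorffEdist s t ≠ ⊤ :=
  Metric.hausdorffEdist_ne_top_of_nonempty_of_bounded hs ht
    (isCompact_univ.isBounded.subset (Set.subset_univ s))
    (isCompact_univ.isBounded.subset (Set.subset_univ t))

lemma mem_of_tendsto_hd (S : ℕ → NonemptyCompacts X) (L : NonemptyCompacts X)
    (hS : Tendsto (fun n => Metric.hausdorffDist (S n : Set X) (L : Set X)) atTop (𝓝 0))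
    {ps : ℕ → X} (hp : ∀ n, ps n ∈ (S n : Set X)) {p : X} (hps : Tendsto ps atTop (𝓝 p)) :
    p ∈ (L : Set X) := by
  have h1 : ∀ n, Metric.infDist p (L : Set X) ≤
      Metric.hausdorffDist (S n : Set X) (L : Set X) + dist p (ps n) := by
    intro n
    refine le_trans (Metric.infDist_le_infDist_add_dist (y := ps n)) ?_
    gcongr
    exact Metric.infDist_le_hausdorffDist_of_mem (hp n)
      (hd_ne_top _ _ (S n).nonempty L.nonempty)
  have h2 : Tendsto (fun n => Metric.hausdorffDist (S n : Set X) (L : Set X) +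
      dist p (ps n)) atTop (𝓝 0) := by
    have hd : Tendsto (fun n => dist p (ps n)) atTop (𝓝 0) := by
      have := tendsto_iff_dist_tendsto_zero.1 hps
      simpa [dist_comm] using this
    simpa using hS.add hd
  have h3 : Metric.infDist p (L : Set X) ≤ 0 := ge_of_tendsto' h2 h1
  have h4 : Metric.infDist p (L : Set X) = 0 :=
    le_antisymm h3 Metric.infDist_nonneg
  exact (L.isCompact.isClosed.mem_iff_infDist_zero L.nonempty).2 h4

lemma exists_approx (S : ℕ → NonemptyCompacts X) (L : NonemptyCompacts X)
    (hS : Tendsto (fun n => Metric.hausdorffDist (S n : Set X) (L : Set X)) atTop (𝓝 0))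
    {w : X} (hw : w ∈ (L : Set X)) :
    ∃ ws : ℕ → X, (∀ n, ws n ∈ (S n : Set X)) ∧ Tendsto ws atTop (𝓝 w) := by
  have h := fun n => (S n).isCompact.exists_infDist_eq_dist (S n).nonempty w
  choose ws hmem hdist using h
  refine ⟨ws, hmem, tendsto_iff_dist_tendsto_zero.2 ?_⟩
  refine squeeze_zero (fun n => dist_nonneg) (fun n => ?_) hS
  rw [dist_comm, ← hdist n, Metric.hausdorffDist_comm]
  exact Metric.infDist_le_hausdorffDist_of_mem hw
    (hd_ne_top _ _ L.nonempty (S n).nonempty)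

lemma isPreconnected_limit (S : ℕ → NonemptyCompacts X) (L : NonemptyCompacts X)
    (hS : Tendsto (fun n => Metric.hausdorffDist (S n : Set X) (L : Set X)) atTop (𝓝 0))
    (hconn : ∀ n, IsPreconnected (S n : Set X)) : IsPreconnected (L : Set X) := by
  by_contra hnc
  rw [IsPreconnected] at hnc
  push_neg at hnc
  obtain ⟨U, V, hU, hV, hcover, ⟨a₀, ha₀⟩, ⟨b₀, hb₀⟩, hempty⟩ := hnc
  set A : Set X := (L : Set X) \ V with hA
  set B : Set X := (L : Set X) \ U with hB
  have hAc : IsCompact A := L.isCompact.of_isClosed_subset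
    (L.isCompact.isClosed.sdiff hV) Set.diff_subset
  have hBc : IsCompact B := L.isCompact.of_isClosed_subset
    (L.isCompact.isClosed.sdiff hU) Set.diff_subset
  have hUna : ∀ w ∈ (L : Set X), w ∈ U → w ∉ V := by
    intro w hwL hwU hwV
    exact Set.eq_empty_iff_forall_notMem.1 hempty w ⟨hwL, hwU, hwV⟩
  have ha₀A : a₀ ∈ A := ⟨ha₀.1, hUna a₀ ha₀.1 ha₀.2⟩
  have hb₀B : b₀ ∈ B := by
    refine ⟨hb₀.1, fun hbU => ?_⟩
    exact hUna b₀ hb₀.1 hbU hb₀.2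
  have hLAB : ∀ w ∈ (L : Set X), w ∈ A ∨ w ∈ B := by
    intro w hw
    rcases hcover hw with h | h
    · exact Or.inl ⟨hw, hUna w hw h⟩
    · refine Or.inr ⟨hw, fun hwU => hUna w hw hwU h⟩
  -- minimal distance between A and B
  obtain ⟨⟨a₁, b₁⟩, hab, hmin⟩ := (hAc.prod hBc).exists_isMinOn
    ⟨(a₀, b₀), Set.mk_mem_prod ha₀A hb₀B⟩
    (continuous_dist.continuousOn : ContinuousOn (fun p : X × X => dist p.1 p.2) _)
  set ε : ℝ := dist a₁ b₁ with hε
  have hεpos : 0 < ε := by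
    rw [hε, dist_pos]
    rintro rfl
    rcases hcover hab.1.1 with h | h
    · exact hab.2.2 h
    · exact hab.1.2 h
  have hmin' : ∀ a ∈ A, ∀ b ∈ B, ε ≤ dist a b := fun a ha b hb =>
    isMinOn_iff.1 hmin (a, b) (Set.mk_mem_prod ha hb)
  obtain ⟨n, hn⟩ := (hS.eventually_lt_const (show (0:ℝ) < ε/3 by linarith)).exists
  have hfin := hd_ne_top (S n : Set X) (L : Set X) (S n).nonempty L.nonempty
  have hfin' := hd_ne_top (L : Set X) (S n : Set X) L.nonempty (S n).nonempty
  have hn' : Metric.hausdorffDist (L : Set X) (S n : Set X) < ε/3 := by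
    rwa [Metric.hausdorffDist_comm]
  have hsub : (S n : Set X) ⊆ Metric.thickening (ε/3) A ∪ Metric.thickening (ε/3) B := by
    intro xx hxx
    obtain ⟨w, hwL, hdw⟩ := Metric.exists_dist_lt_of_hausdorffDist_lt hxx hn hfin
    rcases hLAB w hwL with h | h
    · exact Or.inl (Metric.mem_thickening_iff.2 ⟨w, h, hdw⟩)
    · exact Or.inr (Metric.mem_thickening_iff.2 ⟨w, h, hdw⟩)
  obtain ⟨sa, hsa, hsad⟩ := Metric.exists_dist_lt_of_hausdorffDist_lt ha₀A.1 hn' hfin'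
  obtain ⟨sb, hsb, hsbd⟩ := Metric.exists_dist_lt_of_hausdorffDist_lt hb₀B.1 hn' hfin'
  have hne1 : ((S n : Set X) ∩ Metric.thickening (ε/3) A).Nonempty :=
    ⟨sa, hsa, Metric.mem_thickening_iff.2 ⟨a₀, ha₀A, by rwa [dist_comm]⟩⟩
  have hne2 : ((S n : Set X) ∩ Metric.thickening (ε/3) B).Nonempty :=
    ⟨sb, hsb, Metric.mem_thickening_iff.2 ⟨b₀, hb₀B, by rwa [dist_comm]⟩⟩
  obtain ⟨xx, -, hxA, hxB⟩ := hconn n (Metric.thickening (ε/3) A)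
    (Metric.thickening (ε/3) B) Metric.isOpen_thickening Metric.isOpen_thickening
    hsub hne1 hne2
  obtain ⟨a, haA, hda⟩ := Metric.mem_thickening_iff.1 hxA
  obtain ⟨b, hbB, hdb⟩ := Metric.mem_thickening_iff.1 hxB
  have : dist a b < ε := by
    calc dist a b ≤ dist a xx + dist xx b := dist_triangle _ _ _
    _ < ε/3 + ε/3 := by rw [dist_comm a xx]; exact add_lt_add hda hdb
    _ < ε := by linarith
  exact absurd (hmin' a haA b hbB) (not_le.2 this)

end Helpers



/-- Claim 2 of the paper: membership in `𝓑_f(m,y)` is stable under small perturbations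
of `g` over fibers of nearby points. -/
theorem memBf_stable {X Y M : Type*} [MetricSpace X] [CompactSpace X]
    [MetricSpace Y] [CompactSpace Y] [MetricSpace M]
    (f : X → Y) (hf : Continuous f) (hcl : IsClosedMap f)
    (hsurj : Function.Surjective f) (hfib : ∀ y', IsCompact (f ⁻¹' {y'}))
    (m : ℕ) (hm : 1 ≤ m) (y : Y) (g : X → M) (hg : Continuous g)
    (hmem : MemBf f m y g) :
    ∃ V ∈ 𝓝 y, ∃ δ > (0 : ℝ), ∀ y' ∈ V, ∀ g' : X → M, Continuous g' →
      (∀ x ∈ f ⁻¹' {y'}, dist (g' x) (g x) < δ) → MemBf f m y' g' := by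
  by_contra hcon
  push_neg at hcon
  have key : ∀ n : ℕ, ∃ (y' : Y) (g' : X → M) (S₀ S₁ : NonemptyCompacts X) (x p q : X),
      dist y' y < 1 / ((n : ℝ) + 1) ∧ Continuous g' ∧
      (∀ w ∈ f ⁻¹' {y'}, dist (g' w) (g w) < 1 / ((n : ℝ) + 1)) ∧
      ((S₀ : Set X) ⊆ f ⁻¹' {y'} ∩ g' ⁻¹' {g' x}) ∧
      ((S₁ : Set X) ⊆ f ⁻¹' {y'} ∩ g' ⁻¹' {g' x}) ∧
      IsPreconnected (S₀ : Set X) ∧ IsPreconnected (S₁ : Set X) ∧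
      x ∈ (S₀ : Set X) ∧ x ∈ (S₁ : Set X) ∧
      p ∈ (S₀ : Set X) ∧ (∀ w ∈ (S₁ : Set X), 1 / (m : ℝ) ≤ dist p w) ∧
      q ∈ (S₁ : Set X) ∧ (∀ w ∈ (S₀ : Set X), 1 / (m : ℝ) ≤ dist q w) := by
    intro n
    have hpos : (0:ℝ) < 1 / ((n : ℝ) + 1) := by positivity
    obtain ⟨y', hy', g', hg', hclose, hnot⟩ := hcon (Metric.ball y (1 / ((n : ℝ) + 1)))
      (Metric.ball_mem_nhds y hpos) (1 / ((n : ℝ) + 1)) hpos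
    unfold MemBf at hnot
    push_neg at hnot
    obtain ⟨z, K₀, K₁, hK₀, hK₁, hc₀, hcn₀, hc₁, hcn₁, ⟨x, hx⟩, hns₀, hns₁⟩ := hnot
    obtain ⟨p, hp, hpns⟩ := Set.not_subset.1 hns₀
    obtain ⟨q, hq, hqns⟩ := Set.not_subset.1 hns₁
    have hz : g' x = z := (hK₀ hx.1).2
    refine ⟨y', g', ⟨⟨K₀, hc₀⟩, ⟨x, hx.1⟩⟩, ⟨⟨K₁, hc₁⟩, ⟨x, hx.2⟩⟩, x, p, q,
      Metric.mem_ball.1 hy', hg', hclose, by rw [hz]; exact hK₀, by rw [hz]; exact hK₁,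
      hcn₀.2, hcn₁.2, hx.1, hx.2, hp, ?_, hq, ?_⟩
    · intro w hw
      by_contra hlt
      exact hpns (Metric.mem_thickening_iff.2 ⟨w, hw, not_le.1 hlt⟩)
    · intro w hw
      by_contra hlt
      exact hqns (Metric.mem_thickening_iff.2 ⟨w, hw, not_le.1 hlt⟩)
  choose ys gs S₀ S₁ xs ps qs hys hgc hclose hsub₀ hsub₁ hpc₀ hpc₁ hx₀ hx₁ hpm hpfar hqm hqfar
    using key
  obtain ⟨⟨L₀, L₁, x, p, q⟩, -, φ, hφ, hconv⟩ := isCompact_univ.tendsto_subseq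
    (x := fun n => ((S₀ n, S₁ n, xs n, ps n, qs n) :
      NonemptyCompacts X × NonemptyCompacts X × X × X × X)) (fun n => Set.mem_univ _)
  have hconv₀ : Tendsto (fun n => S₀ (φ n)) atTop (𝓝 L₀) :=
    (continuous_fst.tendsto _).comp hconv
  have hconv₁ : Tendsto (fun n => S₁ (φ n)) atTop (𝓝 L₁) :=
    ((continuous_fst.comp continuous_snd).tendsto _).comp hconv
  have hconvx : Tendsto (fun n => xs (φ n)) atTop (𝓝 x) :=
    ((continuous_fst.comp (continuous_snd.comp continuous_snd)).tendsto _).comp hconv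
  have hconvp : Tendsto (fun n => ps (φ n)) atTop (𝓝 p) :=
    ((continuous_fst.comp (continuous_snd.comp (continuous_snd.comp
      continuous_snd))).tendsto _).comp hconv
  have hconvq : Tendsto (fun n => qs (φ n)) atTop (𝓝 q) :=
    ((continuous_snd.comp (continuous_snd.comp (continuous_snd.comp
      continuous_snd))).tendsto _).comp hconv
  -- rates
  have hrate : Tendsto (fun n => 1 / ((φ n : ℝ) + 1)) atTop (𝓝 0) := by
    refine squeeze_zero (fun n => by positivity) (fun n => ?_)
      tendsto_one_div_add_atTop_nhds_zero_nat
    have h1 : (n : ℝ) + 1 ≤ (φ n : ℝ) + 1 := by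
      have h0 : n ≤ φ n := hφ.le_apply
      have : (n : ℝ) ≤ (φ n : ℝ) := Nat.cast_le.2 h0
      linarith
    exact one_div_le_one_div_of_le (by positivity) h1
  have hd₀ : Tendsto (fun n => Metric.hausdorffDist ((S₀ (φ n)) : Set X) (L₀ : Set X))
      atTop (𝓝 0) := by
    have := tendsto_iff_dist_tendsto_zero.1 hconv₀
    simpa [Metric.NonemptyCompacts.dist_eq] using this
  have hd₁ : Tendsto (fun n => Metric.hausdorffDist ((S₁ (φ n)) : Set X) (L₁ : Set X))
      atTop (𝓝 0) := by
    have := tendsto_iff_dist_tendsto_zero.1 hconv₁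
    simpa [Metric.NonemptyCompacts.dist_eq] using this
  have hyconv : Tendsto (fun n => ys (φ n)) atTop (𝓝 y) := by
    refine tendsto_iff_dist_tendsto_zero.2 (squeeze_zero (fun n => dist_nonneg)
      (fun n => (hys (φ n)).le) hrate)
  -- the limit of the common points
  have hxL₀ : x ∈ (L₀ : Set X) := mem_of_tendsto_hd _ _ hd₀ (fun n => hx₀ (φ n)) hconvx
  have hxL₁ : x ∈ (L₁ : Set X) := mem_of_tendsto_hd _ _ hd₁ (fun n => hx₁ (φ n)) hconvx
  have hpL₀ : p ∈ (L₀ : Set X) := mem_of_tendsto_hd _ _ hd₀ (fun n => hpm (φ n)) hconvp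
  have hqL₁ : q ∈ (L₁ : Set X) := mem_of_tendsto_hd _ _ hd₁ (fun n => hqm (φ n)) hconvq
  -- the limits are contained in the fiber
  have main : ∀ (L : NonemptyCompacts X) (Ss : ℕ → NonemptyCompacts X),
      Tendsto (fun n => Metric.hausdorffDist ((Ss n) : Set X) (L : Set X)) atTop (𝓝 0) →
      (∀ n, ((Ss n) : Set X) ⊆ f ⁻¹' {ys (φ n)} ∩ (gs (φ n)) ⁻¹' {gs (φ n) (xs (φ n))}) →
      (L : Set X) ⊆ f ⁻¹' {y} ∩ g ⁻¹' {g x} := by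
    intro L Ss hdS hsubS w hw
    obtain ⟨ws, hwsmem, hwsconv⟩ := exists_approx Ss L hdS hw
    have hwf : ∀ n, f (ws n) = ys (φ n) := fun n => (hsubS n (hwsmem n)).1
    have hxf : ∀ n, f (xs (φ n)) = ys (φ n) := fun n => (hsub₀ (φ n) (hx₀ (φ n))).1
    constructor
    · have h1 : Tendsto (fun n => f (ws n)) atTop (𝓝 (f w)) := (hf.tendsto w).comp hwsconv
      have h2 : Tendsto (fun n => f (ws n)) atTop (𝓝 y) := by
        simpa only [hwf] using hyconv
      exact tendsto_nhds_unique h1 h2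
    · have hbound : ∀ n, dist (g (ws n)) (g (xs (φ n))) ≤
          1 / ((φ n : ℝ) + 1) + 1 / ((φ n : ℝ) + 1) := by
        intro n
        have e1 : gs (φ n) (ws n) = gs (φ n) (xs (φ n)) := (hsubS n (hwsmem n)).2
        have e2 : dist (gs (φ n) (ws n)) (g (ws n)) < 1 / ((φ n : ℝ) + 1) :=
          hclose (φ n) (ws n) (hwf n)
        have e3 : dist (gs (φ n) (xs (φ n))) (g (xs (φ n))) < 1 / ((φ n : ℝ) + 1) :=
          hclose (φ n) (xs (φ n)) (hxf n)
        calc dist (g (ws n)) (g (xs (φ n)))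
            ≤ dist (g (ws n)) (gs (φ n) (ws n)) + dist (gs (φ n) (ws n)) (g (xs (φ n))) :=
              dist_triangle _ _ _
          _ = dist (gs (φ n) (ws n)) (g (ws n)) + dist (gs (φ n) (xs (φ n))) (g (xs (φ n))) := by
              rw [dist_comm (g (ws n)), e1]
          _ ≤ 1 / ((φ n : ℝ) + 1) + 1 / ((φ n : ℝ) + 1) := by
              exact add_le_add e2.le e3.le
      have hlim : Tendsto (fun n => dist (g (ws n)) (g (xs (φ n)))) atTop
          (𝓝 (dist (g w) (g x))) :=
        ((hg.tendsto w).comp hwsconv).dist ((hg.tendsto x).comp hconvx)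
      have hzero : Tendsto (fun n => 1 / ((φ n : ℝ) + 1) + 1 / ((φ n : ℝ) + 1)) atTop
          (𝓝 0) := by simpa using hrate.add hrate
      have : dist (g w) (g x) ≤ 0 := le_of_tendsto_of_tendsto' hlim hzero hbound
      have : g w = g x := by
        rw [← dist_le_zero]; exact this
      exact this
  have hsubL₀ : (L₀ : Set X) ⊆ f ⁻¹' {y} ∩ g ⁻¹' {g x} :=
    main L₀ (fun n => S₀ (φ n)) hd₀ (fun n => hsub₀ (φ n))
  have hsubL₁ : (L₁ : Set X) ⊆ f ⁻¹' {y} ∩ g ⁻¹' {g x} :=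
    main L₁ (fun n => S₁ (φ n)) hd₁ (fun n => hsub₁ (φ n))
  -- connectedness of the limits
  have hconnL₀ : IsConnected (L₀ : Set X) :=
    ⟨L₀.nonempty, isPreconnected_limit _ _ hd₀ (fun n => hpc₀ (φ n))⟩
  have hconnL₁ : IsConnected (L₁ : Set X) :=
    ⟨L₁.nonempty, isPreconnected_limit _ _ hd₁ (fun n => hpc₁ (φ n))⟩
  -- far points survive in the limit
  have hpfarL : ∀ w ∈ (L₁ : Set X), 1 / (m : ℝ) ≤ dist p w := by
    intro w hw
    obtain ⟨ws, hwsmem, hwsconv⟩ := exists_approx _ L₁ hd₁ hw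
    have hlim : Tendsto (fun n => dist (ps (φ n)) (ws n)) atTop (𝓝 (dist p w)) :=
      hconvp.dist hwsconv
    exact ge_of_tendsto' hlim (fun n => hpfar (φ n) (ws n) (hwsmem n))
  have hqfarL : ∀ w ∈ (L₀ : Set X), 1 / (m : ℝ) ≤ dist q w := by
    intro w hw
    obtain ⟨ws, hwsmem, hwsconv⟩ := exists_approx _ L₀ hd₀ hw
    have hlim : Tendsto (fun n => dist (qs (φ n)) (ws n)) atTop (𝓝 (dist q w)) :=
      hconvq.dist hwsconv
    exact ge_of_tendsto' hlim (fun n => hqfar (φ n) (ws n) (hwsmem n))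
  rcases hmem (g x) (L₀ : Set X) (L₁ : Set X) hsubL₀ hsubL₁ L₀.isCompact hconnL₀
      L₁.isCompact hconnL₁ ⟨x, hxL₀, hxL₁⟩ with h | h
  · obtain ⟨w, hw, hlt⟩ := Metric.mem_thickening_iff.1 (h hpL₀)
    exact absurd (hpfarL w hw) (not_le.2 hlt)
  · obtain ⟨w, hw, hlt⟩ := Metric.mem_thickening_iff.1 (h hqL₁)
    exact absurd (hqfarL w hw) (not_le.2 hlt)
end

section
/- For every metric space Y there exists a zero-dimensional F_σ subset C of Y × [0,1] such that C ∩ ({y} × [0,1]) ≠ ∅ for every y ∈ Y. -/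
open Set Metric Topology Filter

namespace ZDF

noncomputable def term (b : ℕ → Bool) (k : ℕ) : ℝ :=
  (if b k then (2:ℝ) else 0) * (1/3)^(k+1)

lemma term_nonneg (b : ℕ → Bool) (k : ℕ) : 0 ≤ term b k := by
  unfold term; positivity

lemma term_le (b : ℕ → Bool) (k : ℕ) : term b k ≤ 2 * (1/3)^(k+1) := by
  unfold term
  split
  · exact le_rfl
  · rw [zero_mul]; positivity

lemma summable_bound : Summable (fun k : ℕ => (2:ℝ) * (1/3)^(k+1)) := by
  have : Summable (fun k : ℕ => (1/3:ℝ)^k) := summable_geometric_of_lt_one (by norm_num) (by norm_num)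
  simpa [pow_succ, mul_comm, mul_assoc, mul_left_comm] using (this.mul_left (2*(1/3) : ℝ))

lemma summable_term (b : ℕ → Bool) : Summable (term b) := by
  refine Summable.of_nonneg_of_le (term_nonneg b) (term_le b) summable_bound

noncomputable def ecode (b : ℕ → Bool) : ℝ := ∑' k, term b k

lemma tailsum (N : ℕ) : ∑' k : ℕ, (2:ℝ) * (1/3)^(k + N + 1) = (1/3)^N := by
  have h : ∀ k : ℕ, (2:ℝ) * (1/3)^(k + N + 1) = (2 * (1/3)^(N+1)) * (1/3)^k := by
    intro k; ring
  rw [tsum_congr h, tsum_mul_left, tsum_geometric_of_lt_one (by norm_num) (by norm_num)]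
  rw [pow_succ]
  norm_num
  ring

lemma tail_nonneg (b : ℕ → Bool) (N : ℕ) : 0 ≤ ∑' k, term b (k + N) :=
  tsum_nonneg fun k => term_nonneg b _

lemma summable_term_shift (b : ℕ → Bool) (N : ℕ) : Summable (fun k => term b (k + N)) :=
  (summable_term b).comp_injective (add_left_injective N)

lemma tail_le (b : ℕ → Bool) (N : ℕ) : ∑' k, term b (k + N) ≤ (1/3)^N := by
  rw [← tailsum N]
  refine Summable.tsum_le_tsum (fun k => ?_) (summable_term_shift b N) ?_
  · simpa using term_le b (k + N)
  · have := summable_bound.comp_injective (add_left_injective N)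
    simpa [Function.comp_def] using this

lemma ecode_nonneg (b : ℕ → Bool) : 0 ≤ ecode b := tsum_nonneg fun k => term_nonneg b k

lemma ecode_le_one (b : ℕ → Bool) : ecode b ≤ 1 := by
  have := Summable.tsum_le_tsum (term_le b) (summable_term b) summable_bound
  simpa [ecode, tailsum 0] using this.trans_eq (by simpa using tailsum 0)

lemma ecode_split (b : ℕ → Bool) (N : ℕ) :
    ecode b = (∑ k ∈ Finset.range N, term b k) + ∑' k, term b (k + N) :=
  (Summable.sum_add_tsum_nat_add N (summable_term b)).symm

/-- prefix agreement implies closeness -/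
lemma ecode_close {b b' : ℕ → Bool} {N : ℕ} (h : ∀ k < N, b k = b' k) :
    |ecode b - ecode b'| ≤ (1/3)^N := by
  have hs : (∑ k ∈ Finset.range N, term b k) = ∑ k ∈ Finset.range N, term b' k := by
    refine Finset.sum_congr rfl fun k hk => ?_
    unfold term; rw [h k (Finset.mem_range.1 hk)]
  rw [ecode_split b N, ecode_split b' N, hs]
  have h1 := tail_le b N
  have h2 := tail_le b' N
  have h3 := tail_nonneg b N
  have h4 := tail_nonneg b' N
  rw [abs_le]
  constructor <;> nlinarith

/-- first disagreement implies separation -/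
lemma ecode_far {b b' : ℕ → Bool} {N : ℕ} (h : ∀ k < N, b k = b' k) (hN : b N ≠ b' N) :
    (1/3)^(N+1) ≤ |ecode b - ecode b'| := by
  have hs : (∑ k ∈ Finset.range (N+1), term b k) - (∑ k ∈ Finset.range (N+1), term b' k)
      = term b N - term b' N := by
    rw [Finset.sum_range_succ, Finset.sum_range_succ]
    have : (∑ k ∈ Finset.range N, term b k) = ∑ k ∈ Finset.range N, term b' k := by
      refine Finset.sum_congr rfl fun k hk => ?_
      unfold term; rw [h k (Finset.mem_range.1 hk)]
    rw [this]; ring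
  have habs : |term b N - term b' N| = 2 * (1/3)^(N+1) := by
    unfold term
    rcases Bool.eq_false_or_eq_true (b N) with hb | hb <;>
      rcases Bool.eq_false_or_eq_true (b' N) with hb' | hb' <;>
      simp [hb, hb'] at hN ⊢ <;>
      rw [abs_of_nonneg (by positivity)] <;> ring
  have h1 := tail_le b (N+1)
  have h2 := tail_le b' (N+1)
  have h3 := tail_nonneg b (N+1)
  have h4 := tail_nonneg b' (N+1)
  rw [ecode_split b (N+1), ecode_split b' (N+1)]
  have habs' : |(term b N - term b' N)| - |(∑' k, term b (k + (N+1))) - ∑' k, term b' (k + (N+1))|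
      ≤ |(∑ k ∈ Finset.range (N+1), term b k + ∑' k, term b (k + (N+1))) -
          (∑ k ∈ Finset.range (N+1), term b' k + ∑' k, term b' (k + (N+1)))| := by
    have : (∑ k ∈ Finset.range (N+1), term b k + ∑' k, term b (k + (N+1))) -
          (∑ k ∈ Finset.range (N+1), term b' k + ∑' k, term b' (k + (N+1)))
        = (term b N - term b' N) + ((∑' k, term b (k + (N+1))) - ∑' k, term b' (k + (N+1))) := by
      rw [← hs]; ring
    rw [this]
    have := abs_add_le ((term b N - term b' N) + ((∑' k, term b (k + (N+1))) - ∑' k, term b' (k + (N+1)))) (-((∑' k, term b (k + (N+1))) - ∑' k, term b' (k + (N+1))))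
    simp only [add_neg_cancel_right, abs_neg] at this
    linarith
  have htail : |(∑' k, term b (k + (N+1))) - ∑' k, term b' (k + (N+1))| ≤ (1/3)^(N+1) := by
    rw [abs_le]; constructor <;> nlinarith
  rw [habs] at habs'
  linarith

lemma ecode_injective : Function.Injective ecode := by
  intro b b' hbb
  by_contra hne
  have hex : ∃ k, b k ≠ b' k := by
    by_contra h
    push_neg at h
    exact hne (funext h)
  classical
  let N := Nat.find hex
  have hN : b N ≠ b' N := Nat.find_spec hex
  have hlt : ∀ k < N, b k = b' k := fun k hk => by
    by_contra hc
    exact absurd (Nat.find_le hc : N ≤ k) (not_le.2 hk)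
  have h1 := ecode_far hlt hN
  rw [hbb, sub_self, abs_zero] at h1
  have h2 : (0:ℝ) < (1/3)^(N+1) := by positivity
  linarith

/-- closeness implies prefix agreement -/
lemma ecode_agree {b b' : ℕ → Bool} {N : ℕ} (h : |ecode b - ecode b'| < (1/3)^N) :
    ∀ k < N, b k = b' k := by
  intro k hk
  by_contra hc
  have hex : ∃ j, b j ≠ b' j := ⟨k, hc⟩
  classical
  let q := Nat.find hex
  have hq : b q ≠ b' q := Nat.find_spec hex
  have hlt : ∀ j < q, b j = b' j := fun j hj => by
    by_contra hcc
    exact absurd (Nat.find_le hcc : q ≤ j) (not_le.2 hj)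
  have hqk : q ≤ k := Nat.find_le hc
  have h1 := ecode_far hlt hq
  have h2 : ((1:ℝ)/3)^N ≤ (1/3)^(q+1) := by
    apply pow_le_pow_of_le_one (by norm_num) (by norm_num)
    omega
  linarith

lemma ecode_continuous : Continuous ecode := by
  refine continuous_tsum (f := fun k b => term b k) (fun k => ?_) summable_bound (fun k b => ?_)
  · show Continuous fun b : ℕ → Bool => (if b k then (2:ℝ) else 0) * (1/3)^(k+1)
    exact (Continuous.comp (g := fun v : Bool => if v then (2:ℝ) else 0)
      continuous_of_discreteTopology (continuous_apply k)).mul continuous_const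
  · rw [Real.norm_eq_abs, abs_of_nonneg (term_nonneg b k)]
    exact term_le b k

variable {Y : Type*} [MetricSpace Y]

lemma stone {ε : ℝ} (hε : 0 < ε) : ∃ G : ℕ → Y → Set Y,
    (∀ m a, IsClosed (G m a)) ∧
    (∀ m a, ∀ x ∈ G m a, ∀ x' ∈ G m a, dist x x' ≤ ε) ∧
    (∀ y : Y, ∃ m a, y ∈ G m a) ∧
    (∀ m : ℕ, ∀ a b : Y, a ≠ b → Disjoint (G m a) (G m b)) ∧
    (LocallyFinite fun p : ℕ × Y => G p.1 p.2) := by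
  classical
  have pow_pos : ∀ k : ℕ, (0:ℝ) < 2⁻¹ ^ k := fun k => by positivity
  have hpow_le : ∀ {m n : ℕ}, m ≤ n → (2⁻¹:ℝ) ^ n ≤ 2⁻¹ ^ m := fun {m n} h =>
    pow_le_pow_of_le_one (by norm_num) (by norm_num) h
  have h2pow : ∀ n : ℕ, 2 * (2⁻¹:ℝ) ^ (n + 1) = 2⁻¹ ^ n := fun n => by
    rw [pow_succ]; ring
  set s : Y → Set Y := fun a => ball a (ε/4) with hs
  have ho : ∀ a, IsOpen (s a) := fun a => isOpen_ball
  have hcov : ∀ x : Y, ∃ i, x ∈ s i := fun x => ⟨x, mem_ball_self (by linarith)⟩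
  obtain ⟨lo, wf⟩ := exists_wellOrder Y
  set ind : Y → Y := fun x => wellFounded_lt.min { i : Y | x ∈ s i } (hcov x)
  have mem_ind : ∀ x, x ∈ s (ind x) := fun x => wellFounded_lt.min_mem _ (hcov x)
  have nmem_of_lt_ind : ∀ {x i}, i < ind x → x ∉ s i := fun {x i} hlt hxi =>
    wellFounded_lt.not_lt_min {i : Y | x ∈ s i} hxi hlt
  set D : ℕ → Y → Set Y := fun n =>
    Nat.strongRecOn' (motive := fun _ => Y → Set Y) (fun n D' i =>
      ⋃ (x : Y) (_ : ind x = i) (_ : ball x (3 * 2⁻¹ ^ n) ⊆ s i) (_ :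
        ∀ (m : ℕ) (H : m < n), ∀ (j : Y), x ∉ D' m H j), ball x (2⁻¹ ^ n)) n with hD
  have Dn : ∀ n i, D n i = ⋃ (x : Y) (_ : ind x = i) (_ : ball x (3 * 2⁻¹ ^ n) ⊆ s i)
      (_ : ∀ m < n, ∀ (j : Y), x ∉ D m j), ball x (2⁻¹ ^ n) := fun n s => by
    simp only [hD]
    exact congrFun (Nat.strongRecOn'_beta (motive := fun _ => Y → Set Y) _ n) s
  have memD : ∀ {n i y},
      y ∈ D n i ↔ ∃ x : Y, ind x = i ∧ ball x (3 * 2⁻¹ ^ n) ⊆ s i ∧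
        (∀ m < n, ∀ (j : Y), x ∉ D m j) ∧ dist y x < 2⁻¹ ^ n := by
    intro n i y
    rw [Dn n i]
    simp only [mem_iUnion, mem_ball, exists_prop]
  have Dcov : ∀ x, ∃ n i, x ∈ D n i := fun x => by
    obtain ⟨n, hn⟩ : ∃ n : ℕ, ball x (3 * 2⁻¹ ^ n) ⊆ s (ind x) := by
      rcases isOpen_iff.1 (ho <| ind x) x (mem_ind x) with ⟨r, r0, hr⟩
      rcases exists_pow_lt_of_lt_one (show (0:ℝ) < r/3 by linarith) (by norm_num : (2⁻¹:ℝ) < 1)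
        with ⟨n, hn⟩
      refine ⟨n, Subset.trans (ball_subset_ball ?_) hr⟩
      nlinarith
    by_contra! h
    apply h n (ind x)
    exact memD.2 ⟨x, rfl, hn, fun _ _ _ => h _ _, by simp [pow_pos n]⟩
  have Dopen : ∀ n i, IsOpen (D n i) := fun n i => by
    rw [Dn]
    iterate 4 refine isOpen_iUnion fun _ => ?_
    exact isOpen_ball
  have HDS : ∀ n i, D n i ⊆ s i := fun n i x => by
    rw [memD]
    rintro ⟨y, rfl, hsub, -, hyx⟩
    refine hsub ?_
    rw [mem_ball]
    have := pow_pos n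
    nlinarith
  -- separation within each level
  have Hsep : ∀ (m : ℕ) (i j : Y), i ≠ j → ∀ y ∈ D m i, ∀ z ∈ D m j,
      (2⁻¹:ℝ) ^ m ≤ dist y z := by
    have key : ∀ (m : ℕ) (i j : Y), i < j → ∀ y ∈ D m i, ∀ z ∈ D m j,
        (2⁻¹:ℝ) ^ m ≤ dist y z := by
      intro m i j hij y hy z hz
      rcases memD.1 hy with ⟨y', hyi, hsuby, -, hdy⟩
      rcases memD.1 hz with ⟨z', hzj, -, -, hdz⟩
      have hz's : z' ∉ s i := by
        apply nmem_of_lt_ind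
        rw [hzj]; exact hij
      have hz'b : z' ∉ ball y' (3 * 2⁻¹ ^ m) := fun hmem => hz's (hsuby hmem)
      rw [mem_ball, not_lt] at hz'b
      have t1 := dist_triangle z' y y'
      have t2 := dist_triangle y z z'
      have e1 : dist z' y = dist y z' := dist_comm _ _
      have e2 : dist y z' ≤ dist y z + dist z z' := dist_triangle _ _ _
      have hdz' : dist z z' < 2⁻¹ ^ m := hdz
      have hdy' : dist y y' < 2⁻¹ ^ m := hdy
      have : (3:ℝ) * 2⁻¹ ^ m ≤ dist z' y' := hz'b
      have t3 : dist z' y' ≤ dist z' z + dist z y + dist y y' := dist_triangle4 _ _ _ _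
      rw [dist_comm z' z, dist_comm z y] at t3
      linarith
    intro m i j hij y hy z hz
    rcases lt_or_gt_of_ne hij with h | h
    · exact key m i j h y hy z hz
    · rw [dist_comm]; exact key m j i h z hz y hy
  refine ⟨fun m a => closure (D m a), fun m a => isClosed_closure, ?_, ?_, ?_, ?_⟩
  · -- diameter
    intro m a x hx x' hx'
    have h1 : closure (D m a) ⊆ closedBall a (ε/4) :=
      closure_minimal ((HDS m a).trans ball_subset_closedBall) isClosed_closedBall
    have hx1 := mem_closedBall.1 (h1 hx)
    have hx2 := mem_closedBall.1 (h1 hx')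
    have := dist_triangle x a x'
    rw [dist_comm a x'] at this
    linarith
  · -- cover
    intro y
    rcases Dcov y with ⟨n, i, h⟩
    exact ⟨n, i, subset_closure h⟩
  · -- disjointness within level
    intro m a b hab
    rw [Set.disjoint_left]
    intro w hwa hwb
    have h2 := pow_pos m
    rcases Metric.mem_closure_iff.1 hwa (2⁻¹^m/2) (by linarith) with ⟨y, hy, hdy⟩
    rcases Metric.mem_closure_iff.1 hwb (2⁻¹^m/2) (by linarith) with ⟨z, hz, hdz⟩
    have := Hsep m a b hab y hy z hz
    have ht : dist y z ≤ dist y w + dist w z := dist_triangle _ _ _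
    rw [dist_comm y w] at ht
    linarith
  · -- local finiteness
    intro x
    rcases Dcov x with ⟨n, i, hn⟩
    rcases Metric.isOpen_iff.1 (Dopen n i) x hn with ⟨r, hr0, hr⟩
    rcases exists_pow_lt_of_lt_one hr0 (by norm_num : (2⁻¹:ℝ) < 1) with ⟨k, hk⟩
    have hsub : ball x (2⁻¹ ^ k) ⊆ D n i := (ball_subset_ball hk.le).trans hr
    set B := ball x (2⁻¹ ^ (n + k + 1)) with hB
    have Hgt : ∀ m ≥ n + k + 1, ∀ (j : Y), Disjoint (D m j) B := by
      intro m hm j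
      rw [Set.disjoint_left]
      rintro y hym hyx
      rcases memD.1 hym with ⟨z, rfl, -, H, hz⟩
      have hzx : z ∉ ball x (2⁻¹ ^ k) := fun hz' => H n (by omega) i (hsub hz')
      apply hzx
      rw [mem_ball]
      rw [hB, mem_ball] at hyx
      have t : dist z x ≤ dist z y + dist y x := dist_triangle _ _ _
      rw [dist_comm z y] at t
      have h1 : (2⁻¹:ℝ) ^ m ≤ 2⁻¹ ^ (k+1) := hpow_le (by omega)
      have h2 : (2⁻¹:ℝ) ^ (n+k+1) ≤ 2⁻¹ ^ (k+1) := hpow_le (by omega)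
      have h3 := h2pow k
      linarith
    have Hle : ∀ m ≤ n + k, Set.Subsingleton { j : Y | (D m j ∩ B).Nonempty } := by
      rintro m hm j₁ ⟨y, hyD, hyB⟩ j₂ ⟨z, hzD, hzB⟩
      by_contra h'
      have hsep := Hsep m j₁ j₂ h' y hyD z hzD
      rw [hB, mem_ball] at hyB hzB
      have t : dist y z ≤ dist y x + dist x z := dist_triangle _ _ _
      rw [dist_comm x z] at t
      have h1 : (2⁻¹:ℝ) ^ (n+k) ≤ 2⁻¹ ^ m := hpow_le (by omega)
      have h3 := h2pow (n+k)
      linarith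
    refine ⟨B, ball_mem_nhds _ (pow_pos _), ?_⟩
    have hfin : (⋃ (m ≤ n + k) (i ∈ { i : Y | (D m i ∩ B).Nonempty }), {(m, i)}).Finite :=
      (finite_le_nat _).biUnion' fun i hi =>
        (Hle i hi).finite.biUnion' fun _ _ => finite_singleton _
    refine hfin.subset fun I hI => ?_
    simp only [mem_iUnion]
    have hI' : (D I.1 I.2 ∩ B).Nonempty := by
      rcases hI with ⟨w, hw1, hw2⟩
      rcases Metric.mem_closure_iff.1 hw1 (2⁻¹ ^ (n+k+1) - dist w x)
        (by rw [hB, mem_ball] at hw2; linarith) with ⟨u, hu, hdu⟩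
      refine ⟨u, hu, ?_⟩
      rw [hB, mem_ball]
      have : dist u x ≤ dist u w + dist w x := dist_triangle _ _ _
      rw [dist_comm u w] at this
      linarith
    refine ⟨I.1, ?_, I.2, hI', rfl⟩
    refine not_lt.1 fun hlt => ?_
    rcases hI' with ⟨w, hw1, hw2⟩
    exact Set.disjoint_left.1 (Hgt I.1 hlt I.2) hw1 hw2

end ZDF

open ZDF

/-- For every metric space `Y` there is a zero-dimensional `F_σ` subset of `Y × [0,1]`
meeting every vertical fiber. -/
theorem exists_zero_dim_Fsigma_meeting_fibers (Y : Type*) [MetricSpace Y] :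
    ∃ C : Set (Y × unitInterval), DimLE0 ↥C ∧
      (∃ F : ℕ → Set (Y × unitInterval), (∀ i, IsClosed (F i)) ∧ C = ⋃ i, F i) ∧
      ∀ y : Y, ∃ t : unitInterval, (y, t) ∈ C := by
  classical
  have HS : ∀ n : ℕ, ∃ G : ℕ → Y → Set Y,
      (∀ m a, IsClosed (G m a)) ∧
      (∀ m a, ∀ x ∈ G m a, ∀ x' ∈ G m a, dist x x' ≤ (1/2)^n) ∧
      (∀ y : Y, ∃ m a, y ∈ G m a) ∧
      (∀ m : ℕ, ∀ a b : Y, a ≠ b → Disjoint (G m a) (G m b)) ∧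
      (LocallyFinite fun p : ℕ × Y => G p.1 p.2) :=
    fun n => stone (by positivity)
  choose G hGcl hGdiam hGcov hGdisj hGlf using HS
  set KK : ℕ → ℕ → Set ℝ := fun n m =>
    ecode '' { b | (∀ j < m, b (Nat.pair n j) = true) ∧ b (Nat.pair n m) = false } with hKK
  set A : ℕ → Set (Y × unitInterval) := fun n =>
    ⋃ m, (⋃ a, G n m a) ×ˢ (Subtype.val ⁻¹' KK n m) with hA
  set C : Set (Y × unitInterval) := ⋂ n, A n with hC
  -- uniqueness of the digit index
  have hKKuniq : ∀ n m m' t, t ∈ KK n m → t ∈ KK n m' → m = m' := by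
    rintro n m m' t ⟨b, ⟨hbt, hbf⟩, rfl⟩ ⟨b', ⟨hbt', hbf'⟩, he⟩
    have hb : b' = b := ecode_injective he
    subst hb
    rcases lt_trichotomy m m' with h | h | h
    · rw [hbt' m h] at hbf; exact absurd hbf (by simp)
    · exact h
    · rw [hbt m' h] at hbf'; exact absurd hbf' (by simp)
  have hKKclosed : ∀ n m, IsClosed (KK n m) := by
    intro n m
    have hS : IsClosed { b : ℕ → Bool | (∀ j < m, b (Nat.pair n j) = true) ∧
        b (Nat.pair n m) = false } := by
      have h1 : IsClosed (⋂ j ∈ Set.Iio m, {b : ℕ → Bool | b (Nat.pair n j) = true}) :=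
        isClosed_iInter fun j => isClosed_iInter fun _ =>
          (isClosed_eq (continuous_apply (Nat.pair n j)) continuous_const)
      have h2 : IsClosed {b : ℕ → Bool | b (Nat.pair n m) = false} :=
        isClosed_eq (continuous_apply (Nat.pair n m)) continuous_const
      have : { b : ℕ → Bool | (∀ j < m, b (Nat.pair n j) = true) ∧ b (Nat.pair n m) = false }
          = (⋂ j ∈ Set.Iio m, {b : ℕ → Bool | b (Nat.pair n j) = true}) ∩
            {b : ℕ → Bool | b (Nat.pair n m) = false} := by
        ext b; simp [Set.mem_iInter]
      rw [this]
      exact h1.inter h2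
    exact (hS.isCompact.image ecode_continuous).isClosed
  have hEcl : ∀ n m, IsClosed (⋃ a, G n m a) := by
    intro n m
    refine LocallyFinite.isClosed_iUnion ?_ fun a => hGcl n m a
    intro x
    obtain ⟨V, hV, hfin⟩ := hGlf n x
    refine ⟨V, hV, ?_⟩
    have : {a : Y | ((fun a => G n m a) a ∩ V).Nonempty} ⊆ Prod.mk m ⁻¹'
        {p : ℕ × Y | (G n p.1 p.2 ∩ V).Nonempty} := fun a ha => ha
    exact (hfin.preimage (Function.Injective.injOn
      (fun a a' h => congrArg Prod.snd h))).subset this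
  have hAcl : ∀ n, IsClosed (A n) := by
    intro n
    rw [hA]
    refine LocallyFinite.isClosed_iUnion ?_ fun m =>
      (hEcl n m).prod ((hKKclosed n m).preimage continuous_subtype_val)
    intro p
    obtain ⟨V, hV, hfin⟩ := hGlf n p.1
    refine ⟨V ×ˢ univ, prod_mem_nhds hV univ_mem, ?_⟩
    have hsub : {m : ℕ | (((⋃ a, G n m a) ×ˢ (Subtype.val ⁻¹' KK n m)) ∩
        V ×ˢ (univ : Set unitInterval)).Nonempty}
        ⊆ Prod.fst '' {p : ℕ × Y | (G n p.1 p.2 ∩ V).Nonempty} := by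
      rintro m ⟨q, ⟨hq1, -⟩, hq2, -⟩
      rcases mem_iUnion.1 hq1 with ⟨a, ha⟩
      exact ⟨(m, a), ⟨q.1, ha, hq2⟩, rfl⟩
    exact (hfin.image _).subset hsub
  have hCcl : IsClosed C := isClosed_iInter hAcl
  refine ⟨C, ?_, ⟨fun _ => C, fun _ => hCcl, (iUnion_const C).symm⟩, ?_⟩
  · -- DimLE0
    intro 𝒰 hUo hUc
    have hxA : ∀ (x : ↥C) (k : ℕ), ∃ m a b, x.val.1 ∈ G k m a ∧
        ((∀ j < m, b (Nat.pair k j) = true) ∧ b (Nat.pair k m) = false) ∧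
        ecode b = (x.val.2 : ℝ) := by
      intro x k
      have hx := mem_iInter.1 (show x.val ∈ ⋂ n, A n from x.2) k
      rcases mem_iUnion.1 (show x.val ∈ ⋃ m, (⋃ a, G k m a) ×ˢ (Subtype.val ⁻¹' KK k m) from hx)
        with ⟨m, hm⟩
      obtain ⟨h1, h2⟩ := hm
      rcases mem_iUnion.1 h1 with ⟨a, ha⟩
      rcases h2 with ⟨b, hb, hbe⟩
      exact ⟨m, a, b, ha, hb, hbe⟩
    choose M Aa Bb hMG hBpat hBe using hxA
    set PP : ℕ → ℕ → Y → Set ↥C := fun k m a =>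
      { z | z.val.1 ∈ G k m a ∧ (z.val.2 : ℝ) ∈ KK k m } with hPP
    set CY : ℕ → (ℕ → Bool) → Set ↥C := fun N v =>
      { z | ∃ b, (z.val.2 : ℝ) = ecode b ∧ ∀ j < N, b j = v j } with hCY
    set Q : ℕ → ↥C → Set ↥C := fun n x =>
      (⋂ k ∈ Finset.range (n+1), PP k (M x k) (Aa x k)) ∩ CY n (Bb x 0) with hQ
    have hxQ : ∀ (n : ℕ) (x : ↥C), x ∈ Q n x := by
      intro n x
      refine ⟨mem_iInter₂.2 fun k _ => ⟨hMG x k, ⟨Bb x k, hBpat x k, hBe x k⟩⟩,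
        ⟨Bb x 0, (hBe x 0).symm, fun j _ => rfl⟩⟩
    have heq : ∀ (n : ℕ) (x x' z : ↥C), z ∈ Q n x → z ∈ Q n x' → Q n x = Q n x' := by
      intro n x x' z hzx hzx'
      obtain ⟨hzP, hzC⟩ := hzx
      obtain ⟨hzP', hzC'⟩ := hzx'
      have hidx : ∀ k ∈ Finset.range (n+1), M x k = M x' k ∧ Aa x k = Aa x' k := by
        intro k hk
        have h1 := mem_iInter₂.1 hzP k hk
        have h2 := mem_iInter₂.1 hzP' k hk
        have hm : M x k = M x' k := hKKuniq k _ _ _ h1.2 h2.2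
        refine ⟨hm, ?_⟩
        by_contra hne
        exact Set.disjoint_left.1 (hGdisj k (M x k) (Aa x k) (Aa x' k) hne) h1.1
          (by rw [hm]; exact h2.1)
      have hpre : ∀ j < n, Bb x 0 j = Bb x' 0 j := by
        obtain ⟨b, hbe, hbp⟩ := hzC
        obtain ⟨b', hbe', hbp'⟩ := hzC'
        have hbb : b = b' := ecode_injective (hbe.symm.trans hbe')
        intro j hj
        rw [← hbp j hj, hbb, hbp' j hj]
      have e1 : (⋂ k ∈ Finset.range (n+1), PP k (M x k) (Aa x k)) =
          ⋂ k ∈ Finset.range (n+1), PP k (M x' k) (Aa x' k) :=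
        iInter₂_congr fun k hk => by rw [(hidx k hk).1, (hidx k hk).2]
      have e2 : CY n (Bb x 0) = CY n (Bb x' 0) := by
        rw [hCY]
        ext w
        simp only [mem_setOf_eq]
        constructor <;> rintro ⟨b, hb1, hb2⟩
        · exact ⟨b, hb1, fun j hj => (hb2 j hj).trans (hpre j hj)⟩
        · exact ⟨b, hb1, fun j hj => (hb2 j hj).trans (hpre j hj).symm⟩
      show (⋂ k ∈ Finset.range (n+1), PP k (M x k) (Aa x k)) ∩ CY n (Bb x 0)
          = (⋂ k ∈ Finset.range (n+1), PP k (M x' k) (Aa x' k)) ∩ CY n (Bb x' 0)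
      rw [e1, e2]
    have hmono : ∀ (n n' : ℕ) (x : ↥C), n ≤ n' → Q n' x ⊆ Q n x := by
      intro n n' x h w hw
      obtain ⟨hw1, hw2⟩ := hw
      refine ⟨mem_iInter₂.2 fun k hk => mem_iInter₂.1 hw1 k
        (Finset.mem_range.2 (lt_of_lt_of_le (Finset.mem_range.1 hk) (by omega))), ?_⟩
      obtain ⟨b, hb1, hb2⟩ := hw2
      exact ⟨b, hb1, fun j hj => hb2 j (lt_of_lt_of_le hj h)⟩
    have hdiam : ∀ (n : ℕ) (x z z' : ↥C), z ∈ Q n x → z' ∈ Q n x → dist z z' ≤ (1/2)^n := by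
      intro n x z z' hz hz'
      have hself : n ∈ Finset.range (n+1) := Finset.mem_range.2 (by omega)
      have h1 := mem_iInter₂.1 hz.1 n hself
      have h2 := mem_iInter₂.1 hz'.1 n hself
      have hY : dist z.val.1 z'.val.1 ≤ (1/2)^n := hGdiam n (M x n) (Aa x n) _ h1.1 _ h2.1
      have hT : dist z.val.2 z'.val.2 ≤ (1/2)^n := by
        obtain ⟨b, hb1, hb2⟩ := hz.2
        obtain ⟨b', hb1', hb2'⟩ := hz'.2
        have hagree : ∀ j < n, b j = b' j := fun j hj => (hb2 j hj).trans (hb2' j hj).symm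
        have h13 : ((1:ℝ)/3)^n ≤ (1/2)^n := pow_le_pow_left₀ (by norm_num) (by norm_num) n
        rw [Subtype.dist_eq, Real.dist_eq, hb1, hb1']
        exact le_trans (ecode_close hagree) h13
      have hzz : dist z z' = max (dist z.val.1 z'.val.1) (dist z.val.2 z'.val.2) := rfl
      rw [hzz]
      exact max_le hY hT
    have hPPopen : ∀ (k m : ℕ) (a : Y), IsOpen (PP k m a) := by
      intro k m a
      rw [Metric.isOpen_iff]
      intro z hz
      obtain ⟨hz1, hz2⟩ := hz
      obtain ⟨V, hV, hfin⟩ := hGlf k z.val.1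
      set Bad : Set Y := ⋃ p ∈ {p : ℕ × Y | (G k p.1 p.2 ∩ V).Nonempty ∧ p.1 = m ∧ p.2 ≠ a},
        G k p.1 p.2 with hBadDef
      have hBadcl : IsClosed Bad :=
        Set.Finite.isClosed_biUnion (hfin.subset fun p hp => hp.1) fun p _ => hGcl _ _ _
      have hzBad : z.val.1 ∉ Bad := by
        intro h
        rcases mem_iUnion₂.1 h with ⟨p, ⟨hpV, hpm, hpa⟩, hpmem⟩
        rw [hpm] at hpmem
        exact Set.disjoint_left.1 (hGdisj k m p.2 a hpa) hpmem hz1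
      have hWnhds : V ∩ Badᶜ ∈ 𝓝 z.val.1 :=
        Filter.inter_mem hV (hBadcl.isOpen_compl.mem_nhds hzBad)
      rcases Metric.mem_nhds_iff.1 hWnhds with ⟨ρy, hρy, hballY⟩
      obtain ⟨bz, ⟨hbzt, hbzf⟩, hbze⟩ := hz2
      set Np : ℕ := (Finset.range (m+1)).sup (fun j => Nat.pair k j) + 1 with hNp
      refine ⟨min ρy ((1/3)^Np), lt_min hρy (by positivity), ?_⟩
      intro w hw
      rw [mem_ball] at hw
      have hw' : max (dist w.val.1 z.val.1) (dist w.val.2 z.val.2) < min ρy ((1/3)^Np) := hw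
      have hd1 : dist w.val.1 z.val.1 < ρy :=
        lt_of_le_of_lt (le_max_left _ _) (lt_of_lt_of_le hw' (min_le_left _ _))
      have hd2 : dist w.val.2 z.val.2 < (1/3)^Np :=
        lt_of_le_of_lt (le_max_right _ _) (lt_of_lt_of_le hw' (min_le_right _ _))
      have hwA := mem_iInter.1 (show w.val ∈ ⋂ n, A n from w.2) k
      rcases mem_iUnion.1 (show w.val ∈ ⋃ m, (⋃ a, G k m a) ×ˢ (Subtype.val ⁻¹' KK k m) from hwA)
        with ⟨m'', hm''⟩
      obtain ⟨hw1, hw2⟩ := hm''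
      rcases mem_iUnion.1 hw1 with ⟨a'', ha''⟩
      obtain ⟨bw, ⟨hbwt, hbwf⟩, hbwe⟩ := hw2
      have hdist : |ecode bw - ecode bz| < (1/3)^Np := by
        rw [Subtype.dist_eq, Real.dist_eq] at hd2
        calc |ecode bw - ecode bz| = |(w.val.2:ℝ) - (z.val.2:ℝ)| := by rw [hbwe, hbze]
        _ < _ := hd2
      have hagree := ecode_agree hdist
      have hposm : ∀ j, j ≤ m → Nat.pair k j < Np := by
        intro j hj
        have : Nat.pair k j ≤ (Finset.range (m+1)).sup (fun j => Nat.pair k j) :=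
          Finset.le_sup (Finset.mem_range.2 (by omega))
        omega
      have hmm : m'' = m := by
        rcases lt_trichotomy m'' m with h | h | h
        · exfalso
          have hcon := hagree (Nat.pair k m'') (hposm m'' (le_of_lt h))
          rw [hbwf, hbzt m'' h] at hcon
          exact absurd hcon (by simp)
        · exact h
        · exfalso
          have hcon := hagree (Nat.pair k m) (hposm m le_rfl)
          rw [hbwt m h, hbzf] at hcon
          exact absurd hcon (by simp)
      rw [hmm] at ha'' hbwt hbwf
      have hwV : w.val.1 ∈ V ∩ Badᶜ := hballY (mem_ball.2 hd1)
      have haa : a'' = a := by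
        by_contra hne
        exact hwV.2 (mem_iUnion₂.2 ⟨(m, a''), ⟨⟨w.val.1, ha'', hwV.1⟩, rfl, hne⟩, ha''⟩)
      rw [haa] at ha''
      exact ⟨ha'', ⟨bw, ⟨hbwt, hbwf⟩, hbwe⟩⟩
    have hCYopen : ∀ (N : ℕ) (v : ℕ → Bool), IsOpen (CY N v) := by
      intro N v
      rw [Metric.isOpen_iff]
      intro z hz
      obtain ⟨bz, hbze, hbzp⟩ := hz
      refine ⟨(1/3)^N, by positivity, ?_⟩
      intro w hw
      rw [mem_ball] at hw
      have hw' : max (dist w.val.1 z.val.1) (dist w.val.2 z.val.2) < (1/3)^N := hw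
      have hd2 : dist w.val.2 z.val.2 < (1/3)^N := lt_of_le_of_lt (le_max_right _ _) hw'
      have hwA := mem_iInter.1 (show w.val ∈ ⋂ n, A n from w.2) 0
      rcases mem_iUnion.1
        (show w.val ∈ ⋃ m, (⋃ a, G 0 m a) ×ˢ (Subtype.val ⁻¹' KK 0 m) from hwA) with ⟨m0, hm0⟩
      obtain ⟨-, hw2⟩ := hm0
      obtain ⟨bw, -, hbwe⟩ := hw2
      have hdist : |ecode bw - ecode bz| < (1/3)^N := by
        rw [Subtype.dist_eq, Real.dist_eq] at hd2
        calc |ecode bw - ecode bz| = |(w.val.2:ℝ) - (z.val.2:ℝ)| := by rw [hbwe, ← hbze]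
        _ < _ := hd2
      exact ⟨bw, hbwe.symm, fun j hj => (ecode_agree hdist j hj).trans (hbzp j hj)⟩
    have hQopen : ∀ (n : ℕ) (x : ↥C), IsOpen (Q n x) := fun n x =>
      IsOpen.inter (isOpen_biInter_finset fun k _ => hPPopen k (M x k) (Aa x k))
        (hCYopen n (Bb x 0))
    have hcovsel : ∀ x : ↥C, ∃ n, ∃ U ∈ 𝒰, Q n x ⊆ U := by
      intro x
      have hx : x ∈ ⋃₀ 𝒰 := by rw [hUc]; trivial
      rcases hx with ⟨U, hU, hxU⟩
      rcases Metric.isOpen_iff.1 (hUo U hU) x hxU with ⟨r, hr, hball⟩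
      rcases exists_pow_lt_of_lt_one hr (by norm_num : (1/2:ℝ) < 1) with ⟨n, hn⟩
      refine ⟨n, U, hU, fun z hzQ => hball ?_⟩
      rw [mem_ball]
      exact lt_of_le_of_lt (hdiam n x z x hzQ (hxQ n x)) hn
    set sel : ℕ → ↥C → Prop := fun n x =>
      (∃ U ∈ 𝒰, Q n x ⊆ U) ∧ ∀ k < n, ¬ ∃ U ∈ 𝒰, Q k x ⊆ U with hselDef
    have key : ∀ (n n' : ℕ) (x x' : ↥C), sel n x → sel n' x' → n ≤ n' →
        ∀ z, z ∈ Q n x → z ∈ Q n' x' → Q n x = Q n' x' := by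
      intro n n' x x' hs hs' hnn z hzx hzx'
      have e1 : Q n' x' = Q n' z := heq n' x' z z hzx' (hxQ n' z)
      have e2 : Q n x = Q n z := heq n x z z hzx (hxQ n z)
      rcases eq_or_lt_of_le hnn with rfl | hlt
      · rw [e2, e1]
      · exfalso
        have hx'0 : x' ∈ Q n' z := by rw [← e1]; exact hxQ n' x'
        have hx'1 : x' ∈ Q n z := hmono n n' z (le_of_lt hlt) hx'0
        have hx'2 : x' ∈ Q n x := by rw [e2]; exact hx'1
        have hqe : Q n x = Q n x' := heq n x x' x' hx'2 (hxQ n x')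
        rcases hs.1 with ⟨U, hU, hsub⟩
        exact hs'.2 n hlt ⟨U, hU, by rw [← hqe]; exact hsub⟩
    refine ⟨{V | ∃ n x, sel n x ∧ V = Q n x}, ?_, ?_, ?_, ?_⟩
    · rintro V ⟨n, x, -, rfl⟩
      exact hQopen n x
    · rw [sUnion_eq_univ_iff]
      intro x
      have hex : ∃ n, ∃ U ∈ 𝒰, Q n x ⊆ U := hcovsel x
      exact ⟨Q (Nat.find hex) x, ⟨Nat.find hex, x,
        ⟨Nat.find_spec hex, fun k hk => Nat.find_min hex hk⟩, rfl⟩, hxQ _ x⟩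
    · rintro V ⟨n, x, hsx, rfl⟩ V' ⟨n', x', hsx', rfl⟩ hne
      refine Set.disjoint_left.2 fun z hz hz' => hne ?_
      rcases le_total n n' with h | h
      · exact key n n' x x' hsx hsx' h z hz hz'
      · exact (key n' n x' x hsx' hsx h z hz' hz).symm
    · rintro V ⟨n, x, hsx, rfl⟩
      exact hsx.1
  · -- fibers
    intro y
    have h := fun n => hGcov n y
    choose mf af hmf using h
    set b : ℕ → Bool := fun k => decide ((Nat.unpair k).2 < mf (Nat.unpair k).1) with hb
    have hb0 := ecode_nonneg b
    have hb1 := ecode_le_one b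
    refine ⟨⟨ecode b, hb0, hb1⟩, ?_⟩
    rw [hC, mem_iInter]
    intro n
    rw [hA]
    refine mem_iUnion.2 ⟨mf n, ⟨mem_iUnion.2 ⟨af n, hmf n⟩, ?_⟩⟩
    refine ⟨b, ⟨fun j hj => ?_, ?_⟩, rfl⟩
    · simp [hb, Nat.unpair_pair, hj]
    · simp [hb, Nat.unpair_pair]
end

section
/- Let f : X → Y be a perfect map between metric spaces, define f̃ : X × [0,1] → Y by f̃(x,t) = f(x), and let g : X × [0,1] → [0,1] be a continuous map such that the restriction of g to f̃⁻¹(y) = f⁻¹(y) × [0,1] is a Bing map for every y ∈ Y. Then for every (y,t) ∈ Y × [0,1], the fiber (f̃ △ g)⁻¹(y,t) = g⁻¹(t) ∩ (f⁻¹(y) × [0,1]) projects to f⁻¹(y) by a map with zero-dimensional fibers. -/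
open Set Metric Topology Filter

/-- A compact Hausdorff totally disconnected space has covering dimension ≤ 0. -/
lemma dimLE0_of_compact {Z : Type*} [TopologicalSpace Z] [CompactSpace Z] [T2Space Z]
    [TotallyDisconnectedSpace Z] : DimLE0 Z := by
  intro 𝒰 hopen hcover
  have h : ∀ z : Z, ∃ V : Set Z, IsClopen V ∧ z ∈ V ∧ ∃ U ∈ 𝒰, V ⊆ U := by
    intro z
    have hz : z ∈ ⋃₀ 𝒰 := hcover ▸ mem_univ z
    obtain ⟨U, hU, hzU⟩ := hz
    obtain ⟨V, hV, hzV, hVU⟩ :=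
      isTopologicalBasis_isClopen.exists_subset_of_mem_open hzU (hopen U hU)
    exact ⟨V, hV, hzV, U, hU, hVU⟩
  choose V hVclopen hVmem hVsub using h
  obtain ⟨s, hs⟩ := isCompact_univ.elim_finite_subcover V
    (fun z => (hVclopen z).2) (fun z _ => mem_iUnion.2 ⟨z, hVmem z⟩)
  set l : List Z := s.toList with hl
  set n := l.length with hn
  set W : Fin n → Set Z := fun i => V (l.get i) \ ⋃ j : Fin n, ⋃ (_ : j < i), V (l.get j)
    with hW
  have hWclosed : ∀ i : Fin n, IsClosed (⋃ j : Fin n, ⋃ (_ : j < i), V (l.get j)) := by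
    intro i
    apply isClosed_iUnion_of_finite
    intro j
    apply isClosed_iUnion_of_finite
    intro _
    exact (hVclopen _).1
  refine ⟨Set.range W, ?_, ?_, ?_, ?_⟩
  · rintro _ ⟨i, rfl⟩
    exact (hVclopen _).2.sdiff (hWclosed i)
  · apply eq_univ_of_forall
    intro z
    have hz := hs (mem_univ z)
    have hex : ∃ k : ℕ, ∃ hk : k < n, z ∈ V (l.get ⟨k, hk⟩) := by
      simp only [mem_iUnion] at hz
      obtain ⟨w, hw, hzw⟩ := hz
      have : w ∈ l := by rw [hl]; exact (Finset.mem_toList).2 hw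
      obtain ⟨k, hkw⟩ := List.mem_iff_get.1 this
      rw [← hkw] at hzw
      exact ⟨k.1, k.isLt, hzw⟩
    classical
    obtain ⟨hk, hzk⟩ := Nat.find_spec hex
    refine ⟨W ⟨Nat.find hex, hk⟩, ⟨_, rfl⟩, hzk, ?_⟩
    simp only [mem_iUnion, not_exists]
    rintro ⟨j, hj⟩ hji hzj
    exact Nat.find_min hex hji ⟨hj, hzj⟩
  · rintro _ ⟨i, rfl⟩ _ ⟨j, rfl⟩ hne
    rcases lt_trichotomy i j with hij | hij | hij
    · refine Set.disjoint_left.2 fun z hzi hzj => ?_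
      exact hzj.2 (mem_iUnion.2 ⟨i, mem_iUnion.2 ⟨hij, hzi.1⟩⟩)
    · exact absurd (congrArg W hij) hne
    · refine Set.disjoint_left.2 fun z hzi hzj => ?_
      exact hzi.2 (mem_iUnion.2 ⟨j, mem_iUnion.2 ⟨hij, hzj.1⟩⟩)
  · rintro _ ⟨i, rfl⟩
    obtain ⟨U, hU, hVU⟩ := hVsub (l.get i)
    exact ⟨U, hU, fun z hz => hVU hz.1⟩

/-- If `g : X × [0,1] → [0,1]` restricts to a Bing map on each `f⁻¹(y) × [0,1]`, then each
fiber of `f̃ △ g` projects to `f⁻¹(y)` with zero-dimensional fibers. -/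
theorem bing_fibers_project_zero_dimensional {X Y : Type*} [MetricSpace X] [MetricSpace Y]
    (f : X → Y) (hf : Continuous f) (hcl : IsClosedMap f)
    (hfib : ∀ y, IsCompact (f ⁻¹' {y}))
    (g : X × unitInterval → unitInterval) (hg : Continuous g)
    (hBing : ∀ (y : Y) (t : unitInterval),
      IsBing ((fun p : X × unitInterval => f p.1) ⁻¹' {y} ∩ g ⁻¹' {t})) :
    ∀ (y : Y) (t : unitInterval), ∀ x ∈ f ⁻¹' {y},
      DimLE0 ↥{p : X × unitInterval | f p.1 = y ∧ g p = t ∧ p.1 = x} := by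
  intro y t x hx
  set S : Set (X × unitInterval) := {p | f p.1 = y ∧ g p = t ∧ p.1 = x} with hS
  have hScl : IsClosed S := by
    have h1 : IsClosed {p : X × unitInterval | f p.1 = y} :=
      isClosed_eq (hf.comp continuous_fst) continuous_const
    have h2 : IsClosed {p : X × unitInterval | g p = t} := isClosed_eq hg continuous_const
    have h3 : IsClosed {p : X × unitInterval | p.1 = x} :=
      isClosed_eq continuous_fst continuous_const
    have : S = {p : X × unitInterval | f p.1 = y} ∩
        ({p | g p = t} ∩ {p | p.1 = x}) := by ext p; simp [hS, and_assoc]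
    rw [this]; exact h1.inter (h2.inter h3)
  have hScpt : IsCompact S := by
    refine ((hfib y).prod isCompact_univ).of_isClosed_subset hScl ?_
    rintro p ⟨hp1, -, -⟩
    exact ⟨hp1, mem_univ _⟩
  -- the key step: S is totally disconnected
  have htd : IsTotallyDisconnected S := by
    intro t' ht'S ht'pre p hp q hq
    by_contra hpq
    -- K is a subcontinuum of the Bing fiber
    set K : Set (X × unitInterval) := closure t' with hK
    have hKS : K ⊆ S := hScl.closure_subset_iff.2 ht'S
    have hKcpt : IsCompact K := hScpt.of_isClosed_subset isClosed_closure hKS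
    have hKconn : IsConnected K := ⟨⟨p, subset_closure hp⟩, ht'pre.closure⟩
    have hKfib : K ⊆ (fun p : X × unitInterval => f p.1) ⁻¹' {y} ∩ g ⁻¹' {t} := by
      intro k hk
      obtain ⟨h1, h2, -⟩ := hKS hk
      exact ⟨h1, h2⟩
    have hInd : IsIndecomposable K := hBing y t K hKfib hKcpt hKconn
    -- project to ℝ via the second coordinate
    set φ : X × unitInterval → ℝ := fun p => (p.2 : ℝ) with hφ
    have hφc : Continuous φ := continuous_subtype_val.comp continuous_snd
    set J : Set ℝ := φ '' K with hJdef
    have hJcpt : IsCompact J := hKcpt.image hφc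
    have hJconn : IsConnected J := hKconn.image φ hφc.continuousOn
    have hJIcc : J = Icc (sInf J) (sSup J) := eq_Icc_of_connected_compact hJconn hJcpt
    set a := sInf J with ha
    set b := sSup J with hb
    have hpK : p ∈ K := subset_closure hp
    have hqK : q ∈ K := subset_closure hq
    have hpJ : φ p ∈ J := ⟨p, hpK, rfl⟩
    have hqJ : φ q ∈ J := ⟨q, hqK, rfl⟩
    have hφpq : φ p ≠ φ q := by
      intro h
      apply hpq
      have h1 : p.1 = x := (ht'S hp).2.2
      have h2 : q.1 = x := (ht'S hq).2.2
      exact Prod.ext (h1.trans h2.symm) (Subtype.ext h)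
    have hab : a < b := by
      rw [hJIcc] at hpJ hqJ
      rcases lt_or_eq_of_le hpJ.1 with h | h
      · exact lt_of_lt_of_le h hpJ.2
      · rcases lt_or_eq_of_le hqJ.1 with h' | h'
        · exact lt_of_lt_of_le h' hqJ.2
        · exact absurd (h.symm.trans h') (by simpa using hφpq)
    set m : ℝ := (a + b) / 2 with hm
    have ham : a < m := by rw [hm]; linarith
    have hmb : m < b := by rw [hm]; linarith
    -- bounds
    have hJ01 : J ⊆ Icc (0:ℝ) 1 := by rintro _ ⟨k, -, rfl⟩; exact k.2.2
    have haJ : a ∈ J := hJIcc ▸ left_mem_Icc.2 hab.le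
    have hbJ : b ∈ J := hJIcc ▸ right_mem_Icc.2 hab.le
    -- the parametrization of K
    set ψ : ℝ → X × unitInterval := fun r => (x, Set.projIcc 0 1 zero_le_one r) with hψ
    have hψc : Continuous ψ := continuous_const.prodMk continuous_projIcc
    have hfix : ∀ k ∈ K, ψ (φ k) = k := by
      intro k hk
      have h1 : k.1 = x := (hKS hk).2.2
      have h2 : Set.projIcc (0:ℝ) 1 zero_le_one (k.2 : ℝ) = k.2 := by
        rw [Set.projIcc_of_mem _ k.2.2]
      exact Prod.ext h1.symm h2
    have hψJ : ∀ r ∈ J, ψ r ∈ K ∧ φ (ψ r) = r := by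
      rintro r ⟨k, hk, rfl⟩
      rw [hfix k hk]
      exact ⟨hk, rfl⟩
    set A : Set (X × unitInterval) := K ∩ φ ⁻¹' Iic m with hA
    set B : Set (X × unitInterval) := K ∩ φ ⁻¹' Ici m with hB
    have hAeq : A = ψ '' Icc a m := by
      ext k
      constructor
      · rintro ⟨hk, hkm⟩
        have hkJ : φ k ∈ J := ⟨k, hk, rfl⟩
        rw [hJIcc] at hkJ
        exact ⟨φ k, ⟨hkJ.1, hkm⟩, hfix k hk⟩
      · rintro ⟨r, ⟨har, hrm⟩, rfl⟩
        have hrJ : r ∈ J := hJIcc ▸ ⟨har, hrm.trans hmb.le⟩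
        obtain ⟨h1, h2⟩ := hψJ r hrJ
        exact ⟨h1, by rw [mem_preimage, h2]; exact hrm⟩
    have hBeq : B = ψ '' Icc m b := by
      ext k
      constructor
      · rintro ⟨hk, hkm⟩
        have hkJ : φ k ∈ J := ⟨k, hk, rfl⟩
        rw [hJIcc] at hkJ
        exact ⟨φ k, ⟨hkm, hkJ.2⟩, hfix k hk⟩
      · rintro ⟨r, ⟨hmr, hrb⟩, rfl⟩
        have hrJ : r ∈ J := hJIcc ▸ ⟨ham.le.trans hmr, hrb⟩
        obtain ⟨h1, h2⟩ := hψJ r hrJ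
        exact ⟨h1, by rw [mem_preimage, h2]; exact hmr⟩
    have hAconn : IsConnected A := by
      rw [hAeq]
      exact IsConnected.image ⟨Set.nonempty_Icc.2 ham.le, isPreconnected_Icc⟩ ψ hψc.continuousOn
    have hBconn : IsConnected B := by
      rw [hBeq]
      exact IsConnected.image ⟨Set.nonempty_Icc.2 hmb.le, isPreconnected_Icc⟩ ψ hψc.continuousOn
    have hAcpt : IsCompact A := hKcpt.inter_right (isClosed_Iic.preimage hφc)
    have hBcpt : IsCompact B := hKcpt.inter_right (isClosed_Ici.preimage hφc)
    have hAB : A ∪ B = K := by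
      apply Set.Subset.antisymm
      · exact Set.union_subset inter_subset_left inter_subset_left
      · intro k hk
        rcases le_total (φ k) m with h | h
        · exact Or.inl ⟨hk, h⟩
        · exact Or.inr ⟨hk, h⟩
    have hAne : A ≠ K := by
      obtain ⟨kb, hkb, hkbφ⟩ := hbJ
      intro h
      have : kb ∈ A := h ▸ hkb
      have : φ kb ≤ m := this.2
      rw [hkbφ] at this
      exact absurd this (not_le.2 hmb)
    have hBne : B ≠ K := by
      obtain ⟨ka, hka, hkaφ⟩ := haJ
      intro h
      have : ka ∈ B := h ▸ hka
      have : m ≤ φ ka := this.2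
      rw [hkaφ] at this
      exact absurd this (not_le.2 ham)
    rcases hInd A B inter_subset_left inter_subset_left hAcpt hAconn hBcpt hBconn hAB with
      h | h
    · exact hAne h
    · exact hBne h
  haveI : CompactSpace ↥S := isCompact_iff_compactSpace.mp hScpt
  haveI : TotallyDisconnectedSpace ↥S := totallyDisconnectedSpace_subtype_iff.2 htd
  exact dimLE0_of_compact
end
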